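/- arXiv:math/0505260 — 5 statements merged into one kernel-verified Lean document; each statement's English description precedes it below -/
import Mathlib

section
/- If r : ℝ≥0 → [1, ∞) is a nondecreasing function such that log r(t) / t is nonincreasing and tends to 0 as t → ∞, then r is submultiplicative: r(s + t) ≤ r(s) · r(t) for all s, t ≥ 0. -/
/-- If `r : [0,∞) → [1,∞)` is nondecreasing and `log r(t) / t` is nonincreasing
and tends to `0` at infinity, then `r` is submultiplicative. -/
theorem stmt_0 (r : ℝ → ℝ)
    (hge : ∀ t, 0 ≤ t → 1 ≤ r t)
    (hmono : MonotoneOn r (Set.Ici 0))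
    (hanti : AntitoneOn (fun t => Real.log (r t) / t) (Set.Ioi 0))
    (hlim : Filter.Tendsto (fun t => Real.log (r t) / t) Filter.atTop (nhds 0)) :
    ∀ s t : ℝ, 0 ≤ s → 0 ≤ t → r (s + t) ≤ r s * r t := by
  intro s t hs ht
  rcases hs.eq_or_lt with h | hs'
  · subst h
    have h1 : 1 ≤ r 0 := hge 0 le_rfl
    have h2 : 0 < r t := lt_of_lt_of_le one_pos (hge t ht)
    rw [zero_add]
    nlinarith
  rcases ht.eq_or_lt with h | ht'
  · subst h
    have h1 : 1 ≤ r 0 := hge 0 le_rfl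
    have h2 : 0 < r s := lt_of_lt_of_le one_pos (hge s hs)
    rw [add_zero]
    nlinarith
  have hst : (0:ℝ) < s + t := by linarith
  have h1 : Real.log (r (s+t)) / (s+t) ≤ Real.log (r s) / s :=
    hanti (Set.mem_Ioi.mpr hs') (Set.mem_Ioi.mpr hst) (by linarith)
  have h2 : Real.log (r (s+t)) / (s+t) ≤ Real.log (r t) / t :=
    hanti (Set.mem_Ioi.mpr ht') (Set.mem_Ioi.mpr hst) (by linarith)
  have hrs : 0 < r s := lt_of_lt_of_le one_pos (hge s hs)
  have hrt : 0 < r t := lt_of_lt_of_le one_pos (hge t ht)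
  have hrst : 0 < r (s+t) := lt_of_lt_of_le one_pos (hge _ hst.le)
  have key : Real.log (r (s+t)) ≤ Real.log (r s) + Real.log (r t) := by
    have e1 : s * (Real.log (r (s+t)) / (s+t)) ≤ Real.log (r s) := by
      rw [div_le_div_iff₀ hst hs'] at h1
      calc s * (Real.log (r (s+t)) / (s+t)) = Real.log (r (s+t)) * s / (s+t) := by ring
        _ ≤ Real.log (r s) := by
          rw [div_le_iff₀ hst]; linarith
    have e2 : t * (Real.log (r (s+t)) / (s+t)) ≤ Real.log (r t) := by
      rw [div_le_div_iff₀ hst ht'] at h2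
      calc t * (Real.log (r (s+t)) / (s+t)) = Real.log (r (s+t)) * t / (s+t) := by ring
        _ ≤ Real.log (r t) := by
          rw [div_le_iff₀ hst]; linarith
    have : s * (Real.log (r (s+t)) / (s+t)) + t * (Real.log (r (s+t)) / (s+t))
        = Real.log (r (s+t)) := by
      field_simp
    linarith
  have := Real.log_le_log_iff hrst (mul_pos hrs hrt)
  rw [← Real.log_mul hrs.ne' hrt.ne'] at key
  exact this.mp key
end

section
/- For a rate function r in Λ₀ with primitive r⁰(t) = ∫₀ᵗ r(s) ds, the inequality r⁰(t₁ + t₂) ≤ r⁰(t₁) + r(t₁)·r⁰(t₂) holds for all t₁, t₂ ≥ 0. -/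
open MeasureTheory

/-- For a rate function `r ∈ Λ₀` with primitive `r⁰(t) = ∫₀ᵗ r(s) ds`, one has
`r⁰(t₁ + t₂) ≤ r⁰(t₁) + r(t₁) · r⁰(t₂)` for all `t₁, t₂ ≥ 0`. -/
theorem stmt_1 (r : ℝ → ℝ)
    (hmeas : Measurable r)
    (hge : ∀ t, 0 ≤ t → 1 ≤ r t)
    (hbdd : ∀ T, 0 < T → ∃ C, ∀ t ∈ Set.Icc (0:ℝ) T, r t ≤ C)
    (hmono : MonotoneOn r (Set.Ici 0))
    (hanti : AntitoneOn (fun t => Real.log (r t) / t) (Set.Ioi 0))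
    (hlim : Filter.Tendsto (fun t => Real.log (r t) / t) Filter.atTop (nhds 0)) :
    ∀ t₁ t₂ : ℝ, 0 ≤ t₁ → 0 ≤ t₂ →
      (∫ s in (0:ℝ)..(t₁ + t₂), r s) ≤
        (∫ s in (0:ℝ)..t₁, r s) + r t₁ * ∫ s in (0:ℝ)..t₂, r s := by
  intro t₁ t₂ h₁ h₂
  have hpos : ∀ t, 0 ≤ t → 0 < r t := fun t ht => lt_of_lt_of_le one_pos (hge t ht)
  -- submultiplicativity
  have hsub : ∀ a b : ℝ, 0 ≤ a → 0 ≤ b → r (a + b) ≤ r a * r b := by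
    intro a b ha hb
    rcases eq_or_lt_of_le ha with rfl | ha'
    · simp only [zero_add]
      nlinarith [hge 0 le_rfl, hge b hb]
    rcases eq_or_lt_of_le hb with rfl | hb'
    · simp only [add_zero]
      nlinarith [hge 0 le_rfl, hge a ha]
    have hab : (0:ℝ) < a + b := by linarith
    have H1 : Real.log (r (a + b)) / (a + b) ≤ Real.log (r a) / a :=
      hanti ha' hab (by linarith)
    have H2 : Real.log (r (a + b)) / (a + b) ≤ Real.log (r b) / b :=
      hanti hb' hab (by linarith)
    have key : Real.log (r (a + b)) ≤ Real.log (r a) + Real.log (r b) := by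
      have e : Real.log (r (a + b)) =
          a * (Real.log (r (a + b)) / (a + b)) + b * (Real.log (r (a + b)) / (a + b)) := by
        field_simp
      rw [e]
      have := mul_le_mul_of_nonneg_left H1 ha
      have := mul_le_mul_of_nonneg_left H2 hb
      have ea : a * (Real.log (r a) / a) = Real.log (r a) := by field_simp
      have eb : b * (Real.log (r b) / b) = Real.log (r b) := by field_simp
      linarith
    have := Real.exp_le_exp.2 key
    rwa [Real.exp_log (hpos _ hab.le), Real.exp_add,
      Real.exp_log (hpos _ ha), Real.exp_log (hpos _ hb)] at this
  -- integrability
  have hI : ∀ a b : ℝ, 0 ≤ a → 0 ≤ b → IntervalIntegrable r volume a b := by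
    intro a b ha hb
    have hs : Set.uIcc a b ⊆ Set.Ici 0 := by
      intro x hx
      rcases Set.mem_uIcc.1 hx with ⟨h, _⟩ | ⟨h, _⟩ <;> simp <;> linarith
    exact (hmono.mono hs).intervalIntegrable
  have hI1 : IntervalIntegrable r volume 0 t₁ := hI 0 t₁ le_rfl h₁
  have hI2 : IntervalIntegrable r volume t₁ (t₁ + t₂) := hI t₁ (t₁ + t₂) h₁ (by linarith)
  have split : (∫ s in (0:ℝ)..(t₁ + t₂), r s) =
      (∫ s in (0:ℝ)..t₁, r s) + ∫ s in t₁..(t₁ + t₂), r s :=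
    (intervalIntegral.integral_add_adjacent_intervals hI1 hI2).symm
  rw [split]
  gcongr -- reduces to the second integral comparison? maybe not; fallback below
  have comp : (∫ s in t₁..(t₁ + t₂), r s) = ∫ s in (0:ℝ)..t₂, r (t₁ + s) := by
    rw [intervalIntegral.integral_comp_add_left r t₁, add_zero]
  rw [comp]
  have hIc : IntervalIntegrable (fun s => r (t₁ + s)) volume 0 t₂ := by
    have : MonotoneOn (fun s => r (t₁ + s)) (Set.uIcc (0:ℝ) t₂) := by
      intro x hx y hy hxy
      rw [Set.uIcc_of_le h₂] at hx hy
      exact hmono (by simp; linarith [hx.1]) (by simp; linarith [hy.1]) (by linarith)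
    exact this.intervalIntegrable
  have hIm : IntervalIntegrable (fun s => r t₁ * r s) volume 0 t₂ :=
    (hI 0 t₂ le_rfl h₂).const_mul _
  calc (∫ s in (0:ℝ)..t₂, r (t₁ + s)) ≤ ∫ s in (0:ℝ)..t₂, r t₁ * r s := by
        apply intervalIntegral.integral_mono_on h₂ hIc hIm
        intro x hx
        exact hsub t₁ x h₁ hx.1
    _ = r t₁ * ∫ s in (0:ℝ)..t₂, r s := intervalIntegral.integral_const_mul _ _
end

section
/- For a rate function r in Λ₀ with primitive r⁰(t) = ∫₀ᵗ r(s) ds, the ratio r(t)/r⁰(t) tends to 0 as t → ∞, and for every a > 0, sup_{t ≥ a} r(t)/r⁰(t) < ∞. -/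
open MeasureTheory

/-!
Monotonicity gives `∫₀ᵗ r ≥ (t - u) r(u)` for every `u ∈ [0, t]`. Writing `L = log r(t)`, the
antitonicity of `log r(s) / s` gives `log r(u) ≥ (u / t) L`, so the choice `u = t - t / L`
(when `L > 1`) yields `r(u) ≥ e^{L - 1} = r(t) / e` and hence `∫₀ᵗ r ≥ t r(t) / (e L)`; when
`L ≤ 1` simply `r(t) ≤ e` and `∫₀ᵗ r ≥ t`. Either way `r(t) / r⁰(t) ≤ e (1 + log r(t)) / t`, and
the right-hand side is antitone on `(0, ∞)` and tends to `0`.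
-/

open Set Filter Topology intervalIntegral

theorem sub_mul_le_integral_of_monotoneOn {f : ℝ → ℝ} {a u b : ℝ}
    (hf : MonotoneOn f (Icc a b)) (hf₀ : ∀ x ∈ Icc a b, 0 ≤ f x) (hau : a ≤ u) (hub : u ≤ b) :
    (b - u) * f u ≤ ∫ x in a..b, f x := by
  have hint : ∀ c d, a ≤ c → c ≤ d → d ≤ b → IntervalIntegrable f volume c d :=
    fun c d hac hcd hdb =>
      (hf.mono (by rw [uIcc_of_le hcd]; exact Icc_subset_Icc hac hdb)).intervalIntegrable
  rw [← integral_add_adjacent_intervals (hint a u le_rfl hau hub) (hint u b hau hub le_rfl)]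
  have hleft : 0 ≤ ∫ x in a..u, f x :=
    integral_nonneg hau fun x hx => hf₀ x ⟨hx.1, hx.2.trans hub⟩
  have hright : (b - u) * f u ≤ ∫ x in u..b, f x := by
    simpa using integral_mono_on hub intervalIntegrable_const (hint u b hau hub le_rfl)
      fun x hx => hf ⟨hau, hub⟩ ⟨hau.trans hx.1, hx.2⟩ hx.1
  linarith

section RateFunction

variable {r : ℝ → ℝ} (hge : ∀ t, 0 ≤ t → 1 ≤ r t) (hmono : MonotoneOn r (Ici 0))
include hge hmono

theorem sub_mul_le_integral_of_rate {u t : ℝ} (hu : 0 ≤ u) (hut : u ≤ t) :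
    (t - u) * r u ≤ ∫ s in (0:ℝ)..t, r s :=
  sub_mul_le_integral_of_monotoneOn (hmono.mono Icc_subset_Ici_self)
    (fun x hx => zero_le_one.trans (hge x hx.1)) hu hut

theorem le_integral_of_rate {t : ℝ} (ht : 0 ≤ t) : t ≤ ∫ s in (0:ℝ)..t, r s :=
  (le_mul_of_one_le_right ht (hge 0 le_rfl)).trans
    (by simpa using sub_mul_le_integral_of_rate hge hmono le_rfl ht)

theorem mul_le_exp_one_mul_log_mul_integral
    (hanti : AntitoneOn (fun t => Real.log (r t) / t) (Ioi 0)) {t : ℝ} (ht : 0 < t)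
    (hL : 1 < Real.log (r t)) :
    t * r t ≤ Real.exp 1 * Real.log (r t) * ∫ s in (0:ℝ)..t, r s := by
  set L := Real.log (r t)
  have hL₀ : 0 < L := one_pos.trans hL
  set u := t - t / L
  have hδ : 0 < t / L := div_pos ht hL₀
  have hδt : t / L < t := div_lt_self ht hL
  have hu : 0 < u := sub_pos.2 hδt
  have hut : u ≤ t := sub_le_self _ hδ.le
  have hlog_u : L - 1 ≤ Real.log (r u) := by
    have hslope : L / t ≤ Real.log (r u) / u := hanti hu ht hut
    have hu_mul : u * (L / t) = L - 1 := by
      simp only [u]; field_simp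
    calc L - 1 = u * (L / t) := hu_mul.symm
      _ ≤ u * (Real.log (r u) / u) := mul_le_mul_of_nonneg_left hslope hu.le
      _ = Real.log (r u) := mul_div_cancel₀ _ hu.ne'
  have hr_u : r t ≤ Real.exp 1 * r u := by
    have hrt : 0 < r t := one_pos.trans_le (hge t ht.le)
    have hru : 0 < r u := one_pos.trans_le (hge u hu.le)
    calc r t = Real.exp 1 * Real.exp (L - 1) := by
          rw [← Real.exp_add, add_sub_cancel, Real.exp_log hrt]
      _ ≤ Real.exp 1 * r u := by
          gcongr
          rw [← Real.exp_log hru]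
          exact Real.exp_le_exp.2 hlog_u
  have hint : t / L * r u ≤ ∫ s in (0:ℝ)..t, r s := by
    simpa [u] using sub_mul_le_integral_of_rate hge hmono hu.le hut
  calc t * r t ≤ t * (Real.exp 1 * r u) := mul_le_mul_of_nonneg_left hr_u ht.le
    _ = Real.exp 1 * L * (t / L * r u) := by field_simp
    _ ≤ Real.exp 1 * L * ∫ s in (0:ℝ)..t, r s := by gcongr

theorem div_integral_le_of_rate
    (hanti : AntitoneOn (fun t => Real.log (r t) / t) (Ioi 0)) {t : ℝ} (ht : 0 < t) :
    r t / ∫ s in (0:ℝ)..t, r s ≤ Real.exp 1 * ((1 + Real.log (r t)) / t) := by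
  have hI : t ≤ ∫ s in (0:ℝ)..t, r s := le_integral_of_rate hge hmono ht.le
  have hL₀ : 0 ≤ Real.log (r t) := Real.log_nonneg (hge t ht.le)
  rw [div_le_iff₀ (ht.trans_le hI), mul_div_assoc', div_mul_eq_mul_div, le_div_iff₀ ht]
  rcases le_or_gt (Real.log (r t)) 1 with hL | hL
  · have hr : r t ≤ Real.exp 1 := by
      rw [← Real.exp_log (one_pos.trans_le (hge t ht.le))]
      exact Real.exp_le_exp.2 hL
    calc r t * t ≤ Real.exp 1 * ∫ s in (0:ℝ)..t, r s :=
          mul_le_mul hr hI ht.le (Real.exp_pos 1).le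
      _ ≤ Real.exp 1 * (1 + Real.log (r t)) * ∫ s in (0:ℝ)..t, r s :=
          mul_le_mul_of_nonneg_right (le_mul_of_one_le_right (Real.exp_pos 1).le (by linarith))
            (ht.le.trans hI)
  · calc r t * t ≤ Real.exp 1 * Real.log (r t) * ∫ s in (0:ℝ)..t, r s := by
          rw [mul_comm]; exact mul_le_exp_one_mul_log_mul_integral hge hmono hanti ht hL
      _ ≤ Real.exp 1 * (1 + Real.log (r t)) * ∫ s in (0:ℝ)..t, r s :=
          mul_le_mul_of_nonneg_right (by gcongr; linarith) (ht.le.trans hI)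

end RateFunction

theorem stmt_2_general (r : ℝ → ℝ)
    (hge : ∀ t, 0 ≤ t → 1 ≤ r t)
    (hmono : MonotoneOn r (Set.Ici 0))
    (hanti : AntitoneOn (fun t => Real.log (r t) / t) (Set.Ioi 0))
    (hlim : Filter.Tendsto (fun t => Real.log (r t) / t) Filter.atTop (nhds 0)) :
    Filter.Tendsto (fun t => r t / ∫ s in (0:ℝ)..t, r s) Filter.atTop (nhds 0) ∧
      ∀ a, 0 < a → ∃ C, ∀ t, a ≤ t → r t / (∫ s in (0:ℝ)..t, r s) ≤ C := by
  set g : ℝ → ℝ := fun t => Real.exp 1 * ((1 + Real.log (r t)) / t)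
  have hbound : ∀ t, 0 < t → r t / ∫ s in (0:ℝ)..t, r s ≤ g t :=
    fun t ht => div_integral_le_of_rate hge hmono hanti ht
  have hg_anti : AntitoneOn g (Ioi 0) := fun s hs t ht hst => by
    simp only [g, add_div]
    exact mul_le_mul_of_nonneg_left
      (add_le_add (one_div_le_one_div_of_le hs hst) (hanti hs ht hst)) (Real.exp_pos 1).le
  have hg_lim : Tendsto g atTop (𝓝 0) := by
    simpa [g, add_div] using (tendsto_inv_atTop_zero.add hlim).const_mul (Real.exp 1)
  refine ⟨squeeze_zero' ?_ ?_ hg_lim, fun a ha => ⟨g a, fun t hat =>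
    (hbound t (ha.trans_le hat)).trans (hg_anti ha (ha.trans_le hat) hat)⟩⟩
  · filter_upwards [eventually_gt_atTop 0] with t ht
    exact div_nonneg (zero_le_one.trans (hge t ht.le))
      (ht.le.trans (le_integral_of_rate hge hmono ht.le))
  · filter_upwards [eventually_gt_atTop 0] with t ht using hbound t ht

/-- For `r ∈ Λ₀` with primitive `r⁰(t) = ∫₀ᵗ r(s) ds`, the ratio `r(t)/r⁰(t)`
tends to `0` as `t → ∞`, and for every `a > 0`, `sup_{t ≥ a} r(t)/r⁰(t) < ∞`. -/
theorem stmt_2 (r : ℝ → ℝ)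
    (hmeas : Measurable r)
    (hge : ∀ t, 0 ≤ t → 1 ≤ r t)
    (hbdd : ∀ T, 0 < T → ∃ C, ∀ t ∈ Set.Icc (0:ℝ) T, r t ≤ C)
    (hmono : MonotoneOn r (Set.Ici 0))
    (hanti : AntitoneOn (fun t => Real.log (r t) / t) (Set.Ioi 0))
    (hlim : Filter.Tendsto (fun t => Real.log (r t) / t) Filter.atTop (nhds 0)) :
    Filter.Tendsto (fun t => r t / ∫ s in (0:ℝ)..t, r s) Filter.atTop (nhds 0) ∧
      ∀ a, 0 < a → ∃ C, ∀ t, a ≤ t → r t / (∫ s in (0:ℝ)..t, r s) ≤ C :=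
  stmt_2_general r hge hmono hanti hlim
end

section
/- For λ > 0 and z > 0, ∫₀^∞ exp(2z√s) · λ exp(−λ s) ds ≤ 1 + 2√π · z · λ^{−1/2} · exp(z² / λ). -/
open MeasureTheory Set Filter Real Topology

/-!
Substituting `s = u²` and completing the square, `2zu - λu² = z²/λ - λ(u - a)²` with `a = z/λ`,
turns the integral into `2λ exp(z²/λ) ∫₀^∞ u exp(-λ(u - a)²) du`. Writing `u = (u - a) + a`, the
first part integrates exactly to `exp(-z²/λ) / (2λ)`, which yields the `1`, and the second is at
most `a` times the full Gaussian integral `√(π/λ)`.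
-/

theorem integral_Ioi_eq_integral_Ioi_mul_comp_sq (f : ℝ → ℝ) :
    ∫ s in Ioi (0 : ℝ), f s = ∫ u in Ioi (0 : ℝ), 2 * u * f (u ^ 2) := by
  rw [← integral_comp_rpow_Ioi f two_ne_zero]
  refine setIntegral_congr_fun measurableSet_Ioi fun u _ => ?_
  norm_num

theorem two_mul_mul_sub_mul_sq_eq {lam : ℝ} (hlam : lam ≠ 0) (z u : ℝ) :
    2 * z * u - lam * u ^ 2 = z ^ 2 / lam - lam * (u - z / lam) ^ 2 := by
  field_simp
  ring

section ShiftedGaussian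

variable {lam : ℝ} (hlam : 0 < lam) (a : ℝ)
include hlam

theorem integral_Ioi_sub_mul_exp_neg_mul_sub_sq :
    ∫ u in Ioi (0 : ℝ), (u - a) * exp (-lam * (u - a) ^ 2) = exp (-lam * a ^ 2) / (2 * lam) := by
  set F : ℝ → ℝ := fun u => -(1 / (2 * lam)) * exp (-lam * (u - a) ^ 2)
  have hderiv : ∀ u ∈ Ici (0 : ℝ), HasDerivAt F ((u - a) * exp (-lam * (u - a) ^ 2)) u := by
    intro u _
    have hinner : HasDerivAt (fun u : ℝ => -lam * (u - a) ^ 2) (-lam * (2 * (u - a))) u := by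
      simpa using (((hasDerivAt_id u).sub_const a).pow 2).const_mul (-lam)
    refine (hinner.exp.const_mul _).congr_deriv ?_
    field_simp
  have hlim : Tendsto F atTop (𝓝 0) := by
    have hsq : Tendsto (fun u : ℝ => -lam * (u - a) ^ 2) atTop atBot :=
      ((tendsto_pow_atTop two_ne_zero).comp (tendsto_atTop_add_const_right _ (-a) tendsto_id)
        |>.congr fun u => by simp [sub_eq_add_neg]).const_mul_atTop_of_neg (neg_neg_of_pos hlam)
    simpa [F] using (tendsto_exp_atBot.comp hsq).const_mul (-(1 / (2 * lam)))
  have hint : Integrable fun u : ℝ => (u - a) * exp (-lam * (u - a) ^ 2) :=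
    (integrable_mul_exp_neg_mul_sq hlam).comp_sub_right a
  rw [integral_Ioi_of_hasDerivAt_of_tendsto' hderiv hint.integrableOn hlim]
  simp only [F, zero_sub, neg_sq]
  ring

theorem integral_Ioi_exp_neg_mul_sub_sq_le :
    ∫ u in Ioi (0 : ℝ), exp (-lam * (u - a) ^ 2) ≤ √(π / lam) :=
  calc ∫ u in Ioi (0 : ℝ), exp (-lam * (u - a) ^ 2)
      ≤ ∫ u, exp (-lam * (u - a) ^ 2) :=
        setIntegral_le_integral ((integrable_exp_neg_mul_sq hlam).comp_sub_right a)
          (.of_forall fun _ => (exp_pos _).le)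
    _ = √(π / lam) := by
        rw [integral_sub_right_eq_self (fun v => exp (-lam * v ^ 2)), integral_gaussian]

theorem integral_Ioi_mul_exp_neg_mul_sub_sq_le (ha : 0 ≤ a) :
    ∫ u in Ioi (0 : ℝ), u * exp (-lam * (u - a) ^ 2)
      ≤ exp (-lam * a ^ 2) / (2 * lam) + a * √(π / lam) := by
  have hint : Integrable fun u : ℝ => exp (-lam * (u - a) ^ 2) :=
    (integrable_exp_neg_mul_sq hlam).comp_sub_right a
  have hint' : Integrable fun u : ℝ => (u - a) * exp (-lam * (u - a) ^ 2) :=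
    (integrable_mul_exp_neg_mul_sq hlam).comp_sub_right a
  calc ∫ u in Ioi (0 : ℝ), u * exp (-lam * (u - a) ^ 2)
      = ∫ u in Ioi (0 : ℝ), ((u - a) * exp (-lam * (u - a) ^ 2) + a * exp (-lam * (u - a) ^ 2)) :=
        setIntegral_congr_fun measurableSet_Ioi fun u _ => by ring
    _ = exp (-lam * a ^ 2) / (2 * lam) + a * ∫ u in Ioi (0 : ℝ), exp (-lam * (u - a) ^ 2) := by
        rw [integral_add hint'.integrableOn (hint.integrableOn.const_mul a), integral_const_mul,
          integral_Ioi_sub_mul_exp_neg_mul_sub_sq hlam]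
    _ ≤ exp (-lam * a ^ 2) / (2 * lam) + a * √(π / lam) := by
        gcongr
        exact integral_Ioi_exp_neg_mul_sub_sq_le hlam a

end ShiftedGaussian

/-- For `λ > 0` and `z > 0`,
`∫₀^∞ exp(2z√s) λ exp(−λs) ds ≤ 1 + 2√π z λ^{−1/2} exp(z²/λ)`. -/
theorem stmt_10 (lam z : ℝ) (hlam : 0 < lam) (hz : 0 < z) :
    (∫ s in Set.Ioi (0:ℝ), Real.exp (2 * z * Real.sqrt s) * (lam * Real.exp (-lam * s))) ≤
      1 + 2 * Real.sqrt Real.pi * z * lam ^ (-(1:ℝ)/2) * Real.exp (z ^ 2 / lam) := by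
  calc ∫ s in Ioi (0 : ℝ), exp (2 * z * √s) * (lam * exp (-lam * s))
      = ∫ u in Ioi (0 : ℝ),
          2 * lam * exp (z ^ 2 / lam) * (u * exp (-lam * (u - z / lam) ^ 2)) := by
        rw [integral_Ioi_eq_integral_Ioi_mul_comp_sq]
        refine setIntegral_congr_fun measurableSet_Ioi fun u (hu : 0 < u) => ?_
        have hexp : exp (2 * z * u) * exp (-lam * u ^ 2)
            = exp (z ^ 2 / lam) * exp (-lam * (u - z / lam) ^ 2) := by
          rw [← exp_add, ← exp_add]
          congr 1
          linear_combination two_mul_mul_sub_mul_sq_eq hlam.ne' z u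
        simp only [sqrt_sq hu.le]
        linear_combination 2 * lam * u * hexp
    _ ≤ 2 * lam * exp (z ^ 2 / lam) *
          (exp (-lam * (z / lam) ^ 2) / (2 * lam) + z / lam * √(π / lam)) := by
        rw [integral_const_mul]
        gcongr
        exact integral_Ioi_mul_exp_neg_mul_sub_sq_le hlam _ (by positivity)
    _ = 1 + 2 * √π * z * lam ^ (-(1 : ℝ) / 2) * exp (z ^ 2 / lam) := by
        have hexponent : -lam * (z / lam) ^ 2 = -(z ^ 2 / lam) := by
          field_simp
        rw [hexponent, exp_neg, neg_div, rpow_neg hlam.le, ← sqrt_eq_rpow, sqrt_div pi_pos.le]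
        have : √lam ≠ 0 := (sqrt_pos.mpr hlam).ne'
        field_simp
end

section
/- Let T be an exponential random variable with rate λ > 0 and let r(t) = (log(e^{β−1} + t))^β for some β ≥ 1. Then E[r(T)] ≤ C(1 + (log(1 ∨ λ⁻¹))^β) for a constant C depending only on β. -/
/-!
With `a = exp (β - 1)` and `L = log (a + λ⁻¹)`, the bound `a + t ≤ (a + λ⁻¹) (1 + λ t)` and
`log (1 + x) ≤ x` give `log (a + t) ≤ L + λ t`. Hence
`E[r(T)] ≤ E[(L + λT)^β] ≤ 2^(β-1) (L^β + Γ(β+1))` by convexity of `x ↦ x^β`, since `λT` is a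
standard exponential variable whose `β`-th moment is `Γ(β+1)`. Finally
`a + λ⁻¹ ≤ (a + 1) max 1 λ⁻¹`, and convexity once more splits `L^β`.
-/

open MeasureTheory Real Set

namespace Real

lemma rpow_add_le_mul_rpow_add_rpow {p a b : ℝ} (ha : 0 ≤ a) (hb : 0 ≤ b) (hp : 1 ≤ p) :
    (a + b) ^ p ≤ 2 ^ (p - 1) * (a ^ p + b ^ p) := by
  lift a to NNReal using ha
  lift b to NNReal using hb
  exact_mod_cast NNReal.rpow_add_le_mul_rpow_add_rpow a b hp

lemma log_add_le_log_add_inv_add_mul {a t c : ℝ} (ha : 0 < a) (ht : 0 ≤ t) (hc : 0 < c) :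
    log (a + t) ≤ log (a + c⁻¹) + c * t := by
  have hfactor : a + t ≤ (a + c⁻¹) * (1 + c * t) := by
    have : (a + c⁻¹) * (1 + c * t) = a + t + c⁻¹ + a * c * t := by field_simp; ring
    nlinarith [mul_nonneg (mul_nonneg ha.le hc.le) ht, inv_pos.2 hc]
  calc log (a + t) ≤ log ((a + c⁻¹) * (1 + c * t)) := log_le_log (by linarith) hfactor
    _ = log (a + c⁻¹) + log (1 + c * t) := log_mul (by positivity) (by positivity)
    _ ≤ log (a + c⁻¹) + c * t := by
        gcongr
        linarith [log_le_sub_one_of_pos (by positivity : 0 < 1 + c * t)]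

lemma log_add_le_log_add_one_add_log_max {a x : ℝ} (ha : 0 ≤ a) (hx : 0 < x) :
    log (a + x) ≤ log (a + 1) + log (max 1 x) := by
  have hm : 1 ≤ max 1 x := le_max_left _ _
  have hxm : x ≤ max 1 x := le_max_right _ _
  rw [← log_mul (by positivity) (by positivity)]
  exact log_le_log (by positivity) (by nlinarith)

end Real

section ExponentialMoments

variable {lam : ℝ}

lemma integral_mul_exp_neg_mul_Ioi (hlam : 0 < lam) :
    ∫ t in Ioi (0 : ℝ), lam * exp (-lam * t) = 1 := by
  rw [integral_const_mul, integral_exp_mul_Ioi (neg_lt_zero.2 hlam)]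
  field_simp
  simp

lemma integral_mul_rpow_mul_exp_neg_mul_Ioi (hlam : 0 < lam) {β : ℝ} (hβ : -1 < β) :
    ∫ t in Ioi (0 : ℝ), (lam * t) ^ β * (lam * exp (-lam * t)) = Gamma (β + 1) := by
  have hintegrand : ∀ t ∈ Ioi (0 : ℝ), (lam * t) ^ β * (lam * exp (-lam * t)) =
      lam ^ (β + 1) * (t ^ (β + 1 - 1) * exp (-(lam * t))) := fun t ht => by
    rw [mul_rpow hlam.le (le_of_lt ht), rpow_add hlam, rpow_one, add_sub_cancel_right, neg_mul]
    ring
  rw [setIntegral_congr_fun measurableSet_Ioi hintegrand, integral_const_mul,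
    integral_rpow_mul_exp_neg_mul_Ioi (by linarith) hlam, ← mul_assoc, ← mul_rpow hlam.le
    (by positivity), mul_one_div_cancel hlam.ne', one_rpow, one_mul]

lemma integrableOn_mul_exp_neg_mul_Ioi (hlam : 0 < lam) :
    IntegrableOn (fun t => lam * exp (-lam * t)) (Ioi 0) :=
  Integrable.of_integral_ne_zero (by rw [integral_mul_exp_neg_mul_Ioi hlam]; exact one_ne_zero)

lemma integrableOn_mul_rpow_mul_exp_neg_mul_Ioi (hlam : 0 < lam) {β : ℝ} (hβ : -1 < β) :
    IntegrableOn (fun t => (lam * t) ^ β * (lam * exp (-lam * t))) (Ioi 0) :=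
  Integrable.of_integral_ne_zero <| by
    rw [integral_mul_rpow_mul_exp_neg_mul_Ioi hlam hβ]
    exact (Gamma_pos_of_pos (by linarith)).ne'

lemma setIntegral_rpow_mul_exp_neg_mul_le {f : ℝ → ℝ} {L β : ℝ} (hlam : 0 < lam)
    (hL : 0 ≤ L) (hβ : 1 ≤ β) (hf_nonneg : ∀ t, 0 < t → 0 ≤ f t)
    (hf_le : ∀ t, 0 < t → f t ≤ L + lam * t) :
    ∫ t in Ioi (0 : ℝ), f t ^ β * (lam * exp (-lam * t)) ≤
      2 ^ (β - 1) * (L ^ β + Gamma (β + 1)) := by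
  set ρ : ℝ → ℝ := fun t => lam * exp (-lam * t)
  have hρ : ∀ t, 0 ≤ ρ t := fun t => by positivity
  have hdom : ∀ t, 0 < t → f t ^ β * ρ t ≤
      2 ^ (β - 1) * (L ^ β * ρ t + (lam * t) ^ β * ρ t) := fun t ht => by
    have hpow : f t ^ β ≤ 2 ^ (β - 1) * (L ^ β + (lam * t) ^ β) :=
      (rpow_le_rpow (hf_nonneg t ht) (hf_le t ht) (by linarith)).trans
        (rpow_add_le_mul_rpow_add_rpow hL (by positivity) hβ)
    calc f t ^ β * ρ t ≤ 2 ^ (β - 1) * (L ^ β + (lam * t) ^ β) * ρ t := by gcongr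
      _ = _ := by ring
  have hint : IntegrableOn (fun t => 2 ^ (β - 1) * (L ^ β * ρ t + (lam * t) ^ β * ρ t))
      (Ioi 0) :=
    (((integrableOn_mul_exp_neg_mul_Ioi hlam).const_mul _).add
      (integrableOn_mul_rpow_mul_exp_neg_mul_Ioi hlam (by linarith))).const_mul _
  calc ∫ t in Ioi (0 : ℝ), f t ^ β * ρ t
      ≤ ∫ t in Ioi (0 : ℝ), 2 ^ (β - 1) * (L ^ β * ρ t + (lam * t) ^ β * ρ t) := by
        refine integral_mono_of_nonneg ?_ hint ?_ <;>
          filter_upwards [ae_restrict_mem measurableSet_Ioi] with t ht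
        · exact mul_nonneg (rpow_nonneg (hf_nonneg t ht) _) (hρ t)
        · exact hdom t ht
    _ = 2 ^ (β - 1) * (L ^ β + Gamma (β + 1)) := by
        rw [integral_const_mul, integral_add ((integrableOn_mul_exp_neg_mul_Ioi hlam).const_mul _)
          (integrableOn_mul_rpow_mul_exp_neg_mul_Ioi hlam (by linarith)), integral_const_mul,
          integral_mul_exp_neg_mul_Ioi hlam, integral_mul_rpow_mul_exp_neg_mul_Ioi hlam
          (by linarith), mul_one]

end ExponentialMoments

/-- If `T ~ Exp(λ)` and `r(t) = (log(e^{β−1} + t))^β` with `β ≥ 1`, then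
`E[r(T)] ≤ C (1 + (log(1 ∨ λ⁻¹))^β)` for a constant `C` depending only on `β`. -/
theorem stmt_11 (β : ℝ) (hβ : 1 ≤ β) :
    ∃ C : ℝ, 0 < C ∧ ∀ lam : ℝ, 0 < lam →
      (∫ t in Set.Ioi (0:ℝ),
          (Real.log (Real.exp (β - 1) + t)) ^ β * (lam * Real.exp (-lam * t))) ≤
        C * (1 + (Real.log (max 1 lam⁻¹)) ^ β) := by
  set a := exp (β - 1)
  have ha : 1 ≤ a := one_le_exp (by linarith)
  set K : ℝ := 2 ^ (β - 1)
  set c := log (a + 1)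
  have hK : 0 < K := by positivity
  have hc : 0 ≤ c := log_nonneg (by linarith)
  have hΓ : 0 < Gamma (β + 1) := Gamma_pos_of_pos (by linarith)
  refine ⟨K * (K * (c ^ β + 1) + Gamma (β + 1)), by positivity, fun lam hlam => ?_⟩
  set L := log (a + lam⁻¹)
  set M := log (max 1 lam⁻¹)
  have hL : 0 ≤ L := log_nonneg (by linarith [inv_pos.2 hlam])
  have hM : 0 ≤ M := log_nonneg (le_max_left _ _)
  have hLβ : L ^ β ≤ K * (c ^ β + M ^ β) :=
    (rpow_le_rpow hL (log_add_le_log_add_one_add_log_max (by linarith) (inv_pos.2 hlam))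
      (by linarith)).trans (rpow_add_le_mul_rpow_add_rpow hc hM hβ)
  have hmoment := setIntegral_rpow_mul_exp_neg_mul_le hlam hL hβ
    (fun t ht => log_nonneg (by linarith)) (fun t ht => log_add_le_log_add_inv_add_mul
      (by linarith) ht.le hlam)
  have hcβ : 0 ≤ c ^ β := rpow_nonneg hc _
  have hMβ : 0 ≤ M ^ β := rpow_nonneg hM _
  refine hmoment.trans ?_
  nlinarith [mul_le_mul_of_nonneg_left hLβ hK.le, mul_nonneg (mul_nonneg hK.le hK.le) hcβ,
    mul_nonneg (mul_nonneg hK.le hK.le) hMβ, mul_nonneg (mul_nonneg hK.le hΓ.le) hMβ]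
end
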